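/- If a sequence (U_n)_{n≥1} of nonnegative integers satisfies 0 ≤ ∑_{d ∣ n} μ(n/d) U_d ≡ 0 (mod n) for all n ≥ 1, then there exists a set X and a bijection f : X → X such that for every n ≥ 1, the number of x ∈ X with f^n(x) = x is exactly U_n. -/

import Mathlib

open Finset ArithmeticFunction
open scoped ArithmeticFunction.Moebius

theorem exact_realization (U : ℕ → ℕ)
    (h : ∀ n, 1 ≤ n →
      0 ≤ ∑ d ∈ n.divisors, (ArithmeticFunction.moebius (n / d) : ℤ) * (U d : ℤ) ∧
      (n : ℤ) ∣ ∑ d ∈ n.divisors, (ArithmeticFunction.moebius (n / d) : ℤ) * (U d : ℤ)) :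
    ∃ (X : Type) (f : X → X), Function.Bijective f ∧
      ∀ n, 1 ≤ n → Nat.card {x : X // f^[n] x = x} = U n := by
  classical
  set S : ℕ → ℤ := fun n => ∑ d ∈ n.divisors, (μ (n / d) : ℤ) * (U d : ℤ) with hS
  set c : ℕ → ℕ := fun n => (S n / n).toNat with hc
  have hnc : ∀ n : ℕ, 1 ≤ n → (n : ℤ) * c n = S n := by
    intro n hn
    obtain ⟨hpos0, k, hk0⟩ := h n hn
    have hpos : 0 ≤ S n := hpos0
    have hk : S n = (n : ℤ) * k := hk0
    have hn0 : (n : ℤ) ≠ 0 := by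
      have : n ≠ 0 := by omega
      exact_mod_cast this
    have hdiv : S n / (n : ℤ) = k := by rw [hk, Int.mul_ediv_cancel_left _ hn0]
    have hknn : 0 ≤ k := by
      by_contra hneg
      push_neg at hneg
      have : S n < 0 := by
        rw [hk]
        exact mul_neg_of_pos_of_neg (by exact_mod_cast hn) hneg
      omega
    simp only [hc, hdiv, Int.toNat_of_nonneg hknn]
    exact hk.symm
  -- Möbius inversion: ∑_{d | n} d * c d = U n
  have hinv : ∀ n, 1 ≤ n → ∑ d ∈ n.divisors, d * c d = U n := by
    have key := (sum_eq_iff_sum_mul_moebius_eq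
      (R := ℤ) (f := fun d => (d : ℤ) * c d) (g := fun n => (U n : ℤ))).mpr ?_
    · intro n hn
      have := key n hn
      exact_mod_cast this
    · intro n hn
      have := Nat.sum_divisorsAntidiagonal' (f := fun a b => (μ a : ℤ) * (U b : ℤ)) (n := n)
      simp only [Int.cast_id] at this ⊢
      rw [this]
      exact (hnc n hn).symm
  refine ⟨Σ n : ℕ, Fin (c n) × ZMod n, fun x => ⟨x.1, x.2.1, x.2.2 + 1⟩, ?_, ?_⟩
  · refine ⟨fun x y hxy => ?_, fun x => ⟨⟨x.1, x.2.1, x.2.2 - 1⟩, by simp⟩⟩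
    obtain ⟨n, i, a⟩ := x
    obtain ⟨m, j, b⟩ := y
    simp only [Sigma.mk.inj_iff] at hxy
    obtain ⟨rfl, h2⟩ := hxy
    rw [heq_eq_eq, Prod.mk.injEq] at h2
    obtain ⟨rfl, h3⟩ := h2
    simpa using h3
  · intro k hk
    set f : (Σ n : ℕ, Fin (c n) × ZMod n) → (Σ n : ℕ, Fin (c n) × ZMod n) :=
      fun x => ⟨x.1, x.2.1, x.2.2 + 1⟩ with hf
    have hiter : ∀ (m : ℕ) (x : Σ n : ℕ, Fin (c n) × ZMod n),
        f^[m] x = ⟨x.1, x.2.1, x.2.2 + m⟩ := by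
      intro m
      induction m with
      | zero => intro x; simp
      | succ m ih =>
        intro x
        rw [Function.iterate_succ_apply', ih x]
        simp only [hf, Sigma.mk.inj_iff, heq_eq_eq, Prod.mk.injEq, true_and]
        push_cast
        ring
    have hfix : ∀ x : Σ n : ℕ, Fin (c n) × ZMod n,
        f^[k] x = x ↔ x.1 ∈ k.divisors := by
      rintro ⟨n, i, a⟩
      rw [hiter]
      simp only [Sigma.mk.inj_iff, heq_eq_eq, Prod.mk.injEq, true_and, Nat.mem_divisors]
      constructor
      · intro hb
        have hk0 : (k : ZMod n) = 0 := add_eq_left.mp hb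
        rcases Nat.eq_zero_or_pos n with rfl | hn
        · exfalso
          have : (k : ℤ) = 0 := hk0
          omega
        · haveI : NeZero n := ⟨hn.ne'⟩
          exact ⟨(ZMod.natCast_eq_zero_iff k n).mp hk0, by omega⟩
      · rintro ⟨hdvd, hk0⟩
        have hn : 0 < n := Nat.pos_of_dvd_of_pos hdvd (by omega)
        haveI : NeZero n := ⟨hn.ne'⟩
        rw [(ZMod.natCast_eq_zero_iff k n).mpr hdvd, add_zero]
    have e1 : {x : Σ n : ℕ, Fin (c n) × ZMod n // f^[k] x = x} ≃
        Σ n : {n : ℕ // n ∈ k.divisors}, Fin (c n.1) × ZMod n.1 :=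
      (Equiv.subtypeEquivRight hfix).trans
        (Equiv.subtypeSigmaEquiv (fun n => Fin (c n) × ZMod n) (fun n => n ∈ k.divisors))
    haveI : ∀ n : {n : ℕ // n ∈ k.divisors}, NeZero n.1 :=
      fun n => ⟨(Nat.pos_of_mem_divisors n.2).ne'⟩
    rw [Nat.card_congr e1]
    rw [Nat.card_eq_fintype_card, Fintype.card_sigma]
    have : ∀ n : {n : ℕ // n ∈ k.divisors},
        Fintype.card (Fin (c n.1) × ZMod n.1) = c n.1 * n.1 := by
      intro n
      rw [Fintype.card_prod, Fintype.card_fin, ZMod.card]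
    rw [Finset.sum_congr rfl (fun n _ => this n)]
    rw [Finset.sum_coe_sort k.divisors (fun n => c n * n)]
    rw [← hinv k hk]
    exact Finset.sum_congr rfl fun d _ => mul_comm _ _
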